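/- In ℝ², let A be a finite indexed family (repetitions allowed) of m horizontal segments and let B be a finite indexed family of n vertical segments, and let t ≥ 2 be an integer. If the bipartite intersection graph G between A and B is K_{t,t}-free, then G has at most 27·t·(m + n) edges. -/

import Mathlib

open Set

/-- The axis-parallel box in `ℝ^d` with corner functions `lo` and `hi`. -/
def boxSet {d : ℕ} (lo hi : Fin d → ℝ) : Set (Fin d → ℝ) :=
  {x | ∀ i, x i ∈ Set.Icc (lo i) (hi i)}

/-- `S` is an axis-parallel box in `ℝ^d` with direction set `F`
(degenerate coordinates allowed). -/
def IsBoxDir {d : ℕ} (S : Set (Fin d → ℝ)) (F : Set (Fin d)) : Prop :=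
  ∃ lo hi : Fin d → ℝ, (∀ i, lo i ≤ hi i) ∧ S = boxSet lo hi ∧ F = {i | lo i < hi i}

/-- `S` is an axis-parallel box in `ℝ^d` (with some direction set). -/
def IsBox {d : ℕ} (S : Set (Fin d → ℝ)) : Prop :=
  ∃ lo hi : Fin d → ℝ, (∀ i, lo i ≤ hi i) ∧ S = boxSet lo hi

/-- The number of hyperedges of the `r`-partite `r`-uniform intersection hypergraph of
the indexed families `B j : Fin (n j) → Set α`. -/
noncomputable def hyperedgeCount {α : Type} {r : ℕ} (n : Fin r → ℕ)
    (B : ∀ j : Fin r, Fin (n j) → Set α) : ℕ :=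
  Nat.card {f : ∀ j : Fin r, Fin (n j) // (⋂ j, B j (f j)).Nonempty}

/-- The intersection hypergraph of the families `B j` is `K_{t,…,t}`-free:
there are no `t`-element subfamilies `S j ⊆ B j` all of whose transversal tuples
have a common point. -/
def KFree {α : Type} {r : ℕ} (t : ℕ) (n : Fin r → ℕ)
    (B : ∀ j : Fin r, Fin (n j) → Set α) : Prop :=
  ¬ ∃ S : ∀ j : Fin r, Finset (Fin (n j)),
      (∀ j, (S j).card = t) ∧
      ∀ f : ∀ j : Fin r, Fin (n j), (∀ j, f j ∈ S j) → (⋂ j, B j (f j)).Nonempty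

/-- `g_t(n_1, …, n_r) = t · n_1 ⋯ n_r · (1/n_1 + ⋯ + 1/n_r)`. -/
noncomputable def gZ {r : ℕ} (t : ℕ) (n : Fin r → ℕ) : ℝ :=
  (t : ℝ) * (∏ j, (n j : ℝ)) * (∑ j, 1 / (n j : ℝ))

/-- `F` is a 2-coherent direction-vector: for some `k`, the common directions of all
families other than `k` number at least two. -/
def TwoCoherent {d r : ℕ} (F : Fin r → Set (Fin d)) : Prop :=
  ∃ k : Fin r, 2 ≤ Set.ncard {i : Fin d | ∀ j : Fin r, j ≠ k → i ∈ F j}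

/-- `S` is a horizontal segment `[a,b] × {c}` in the plane. -/
def IsHorizSeg (S : Set (Fin 2 → ℝ)) : Prop :=
  ∃ a b c : ℝ, a ≤ b ∧ S = {x | x 0 ∈ Set.Icc a b ∧ x 1 = c}

/-- `S` is a vertical segment `{c} × [a,b]` in the plane. -/
def IsVertSeg (S : Set (Fin 2 → ℝ)) : Prop :=
  ∃ a b c : ℝ, a ≤ b ∧ S = {x | x 0 = c ∧ x 1 ∈ Set.Icc a b}

open Finset
open scoped Classical

namespace Stmt6Aux

variable {m : ℕ}

/-- rank from the top: number of elements of `S` strictly `κ`-above `h`. -/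
noncomputable def rk (κ : Fin m → ℝ ×ₗ ℕ) (S : Finset (Fin m)) (h : Fin m) : ℕ :=
  (S.filter fun g => κ h < κ g).card

/-- the `w` elements of `S` with highest `κ`. -/
noncomputable def topw (κ : Fin m → ℝ ×ₗ ℕ) (w : ℕ) (S : Finset (Fin m)) : Finset (Fin m) :=
  S.filter fun h => rk κ S h < w

lemma topw_subset (κ : Fin m → ℝ ×ₗ ℕ) (w : ℕ) (S : Finset (Fin m)) : topw κ w S ⊆ S :=
  filter_subset _ _

lemma rk_lt_rk (κ : Fin m → ℝ ×ₗ ℕ) {S : Finset (Fin m)} {h g : Fin m}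
    (hg : g ∈ S) (hlt : κ h < κ g) : rk κ S g < rk κ S h := by
  apply Finset.card_lt_card
  rw [Finset.ssubset_iff_of_subset]
  · exact ⟨g, by simp [Finset.mem_filter, hg, hlt], by simp [Finset.mem_filter]⟩
  · intro z hz
    simp only [Finset.mem_filter] at hz ⊢
    exact ⟨hz.1, hlt.trans hz.2⟩

lemma lt_of_rk_lt (κ : Fin m → ℝ ×ₗ ℕ) (hinj : Function.Injective κ)
    {S : Finset (Fin m)} {h g : Fin m}
    (hh : h ∈ S) (hlt : rk κ S g < rk κ S h) : κ h < κ g := by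
  rcases lt_trichotomy (κ h) (κ g) with h1 | h1 | h1
  · exact h1
  · have := hinj h1
    subst this
    omega
  · exact absurd (rk_lt_rk κ hh h1) (by omega)

lemma rk_lt_card (κ : Fin m → ℝ ×ₗ ℕ) {S : Finset (Fin m)} {h : Fin m} (hh : h ∈ S) :
    rk κ S h < S.card := by
  apply Finset.card_lt_card
  rw [Finset.ssubset_iff_of_subset (filter_subset _ _)]
  exact ⟨h, hh, by simp [Finset.mem_filter]⟩

lemma card_topw (κ : Fin m → ℝ ×ₗ ℕ) (hinj : Function.Injective κ) (w : ℕ)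
    (S : Finset (Fin m)) : (topw κ w S).card = min w S.card := by
  induction S using Finset.strongInduction with
  | _ S ih =>
  rcases S.eq_empty_or_nonempty with rfl | hne
  · simp [topw]
  obtain ⟨h0, h0S, h0min⟩ := S.exists_min_image κ hne
  have hrk0 : rk κ S h0 = S.card - 1 := by
    have hfe : S.filter (fun g => κ h0 < κ g) = S.erase h0 := by
      ext z
      simp only [Finset.mem_filter, mem_erase]
      constructor
      · rintro ⟨hz, hlt⟩
        exact ⟨fun e => absurd hlt (by rw [e]; exact lt_irrefl _), hz⟩
      · rintro ⟨hne', hz⟩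
        refine ⟨hz, lt_of_le_of_ne (h0min z hz) fun e => hne' (hinj e).symm⟩
    rw [rk, hfe, card_erase_of_mem h0S]
  rcases le_or_gt S.card w with hle | hgt
  · have : topw κ w S = S := by
      apply Finset.filter_true_of_mem
      intro z hz
      exact lt_of_lt_of_le (rk_lt_card κ hz) hle
    rw [this, min_eq_right hle]
  · have hrkeq : ∀ h ∈ S.erase h0, rk κ (S.erase h0) h = rk κ S h := by
      intro h hh
      have hhS := mem_of_mem_erase hh
      unfold rk
      congr 1
      ext z
      simp only [Finset.mem_filter, mem_erase]
      constructor
      · rintro ⟨⟨_, hz⟩, l⟩; exact ⟨hz, l⟩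
      · rintro ⟨hz, l⟩
        refine ⟨⟨?_, hz⟩, l⟩
        rintro rfl
        exact absurd (h0min h hhS) (not_le.2 l)
    have htw : topw κ w S = topw κ w (S.erase h0) := by
      ext z
      simp only [topw, Finset.mem_filter, mem_erase]
      constructor
      · rintro ⟨hz, hrk⟩
        have hzne : z ≠ h0 := by
          rintro rfl
          rw [hrk0] at hrk
          omega
        exact ⟨⟨hzne, hz⟩, by rw [hrkeq z (mem_erase.2 ⟨hzne, hz⟩)]; exact hrk⟩
      · rintro ⟨⟨hzne, hz⟩, hrk⟩
        exact ⟨hz, by rw [← hrkeq z (mem_erase.2 ⟨hzne, hz⟩)]; exact hrk⟩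
    rw [htw, ih _ (Finset.erase_ssubset h0S), card_erase_of_mem h0S]
    omega

/-- The key one-step comparison: elements of the top-`w` of `S` that are not in the
top-`w` of `S'` are few: bounded by "relevant" leavers and enterers. -/
lemma step (κ : Fin m → ℝ ×ₗ ℕ) (hinj : Function.Injective κ) (w : ℕ)
    (S S' : Finset (Fin m)) :
    ((topw κ w S) \ (topw κ w S')).card ≤
      ((S \ S').filter fun h => rk κ S h < w).card +
      ((S' \ S).filter fun h => rk κ S' h < w).card := by
  set D := (topw κ w S) \ (topw κ w S') with hD
  set Dd := D.filter (fun h => h ∈ S') with hDd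
  set Dout := D.filter (fun h => h ∉ S') with hDout
  have hsplit : Dd.card + Dout.card = D.card := card_filter_add_card_filter_not _
  have hDoutle : Dout.card ≤ ((S \ S').filter fun h => rk κ S h < w).card := by
    apply Finset.card_le_card
    intro z hz
    simp only [hDout, hD, topw, Finset.mem_filter, Finset.mem_sdiff] at hz
    simp only [Finset.mem_filter, Finset.mem_sdiff]
    exact ⟨⟨hz.1.1.1, hz.2⟩, hz.1.1.2⟩
  set q := ((S' \ S).filter fun h => rk κ S' h < w).card with hq
  have hDdle : Dd.card ≤ q := by
    rcases Dd.eq_empty_or_nonempty with he | hne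
    · simp [he]
    obtain ⟨h0, h0D, h0min⟩ := Dd.exists_min_image κ hne
    have h0mem : h0 ∈ S ∧ rk κ S h0 < w ∧ h0 ∈ S' ∧ ¬ rk κ S' h0 < w := by
      have := h0D
      simp only [hDd, hD, topw, Finset.mem_filter, Finset.mem_sdiff] at this
      refine ⟨this.1.1.1, this.1.1.2, this.2, ?_⟩
      intro hlt
      exact this.1.2 ⟨this.2, hlt⟩
    have hS'big : w + 1 ≤ S'.card := by
      have := rk_lt_card κ h0mem.2.2.1
      omega
    have hcardtw : (topw κ w S').card = w := by
      rw [card_topw κ hinj]; omega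
    -- all of topw S' is strictly above h0
    have htwabove : ∀ g ∈ topw κ w S', κ h0 < κ g := by
      intro g hg
      simp only [topw, Finset.mem_filter] at hg
      exact lt_of_rk_lt κ hinj h0mem.2.2.1 (by omega)
    -- (Dd.erase h0) ∪ (topw S' ∩ S) ⊆ elements of S above h0
    have hsub : (Dd.erase h0) ∪ ((topw κ w S') ∩ S) ⊆ S.filter fun g => κ h0 < κ g := by
      intro z hz
      rcases Finset.mem_union.1 hz with hz | hz
      · have hz1 := mem_of_mem_erase hz
        have hzne := ne_of_mem_erase hz
        have hzS : z ∈ S := by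
          have := hz1; simp only [hDd, hD, topw, Finset.mem_filter, Finset.mem_sdiff] at this
          exact this.1.1.1
        refine Finset.mem_filter.2 ⟨hzS, lt_of_le_of_ne (h0min z hz1) ?_⟩
        intro e
        exact hzne (hinj e).symm
      · rcases Finset.mem_inter.1 hz with ⟨hz1, hz2⟩
        exact Finset.mem_filter.2 ⟨hz2, htwabove z hz1⟩
    have hdisj : Disjoint (Dd.erase h0) ((topw κ w S') ∩ S) := by
      rw [Finset.disjoint_left]
      intro z hz1 hz2
      have : z ∈ D := mem_of_mem_filter _ (mem_of_mem_erase hz1)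
      rw [hD, Finset.mem_sdiff] at this
      exact this.2 (Finset.mem_inter.1 hz2).1
    have hcount : (Dd.erase h0).card + ((topw κ w S') ∩ S).card ≤ rk κ S h0 := by
      rw [← Finset.card_union_of_disjoint hdisj]
      exact Finset.card_le_card hsub
    have htwsplit : (topw κ w S').card ≤ ((topw κ w S') ∩ S).card + q := by
      have : topw κ w S' ⊆ ((topw κ w S') ∩ S) ∪ ((S' \ S).filter fun h => rk κ S' h < w) := by
        intro z hz
        by_cases hzS : z ∈ S
        · exact Finset.mem_union.2 (Or.inl (Finset.mem_inter.2 ⟨hz, hzS⟩))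
        · simp only [topw, Finset.mem_filter] at hz
          exact Finset.mem_union.2 (Or.inr (Finset.mem_filter.2 ⟨Finset.mem_sdiff.2 ⟨hz.1, hzS⟩, hz.2⟩))
      calc (topw κ w S').card ≤ _ := Finset.card_le_card this
        _ ≤ _ := Finset.card_union_le _ _
    have hDd1 : 1 ≤ Dd.card := Finset.card_pos.2 hne
    have hDde : (Dd.erase h0).card = Dd.card - 1 := card_erase_of_mem h0D
    have := h0mem.2.1
    omega
  have : D.card ≤ Dout.card + Dd.card := by omega
  omega


section Geom

variable {n : ℕ} (t : ℕ) (a b y : Fin m → ℝ) (x s e : Fin n → ℝ)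

noncomputable def kappa : Fin m → ℝ ×ₗ ℕ := fun i => toLex (y i, (i : ℕ))

lemma kappa_inj : Function.Injective (kappa y) := by
  intro i j hij
  unfold kappa at hij
  have h2 := congrArg (fun p => (ofLex p).2) hij
  simpa [Fin.val_injective.eq_iff] using h2

lemma kappa_le_imp {h g : Fin m} (hle : kappa y h ≤ kappa y g) : y h ≤ y g := by
  unfold kappa at hle
  rcases (Prod.Lex.le_iff).1 hle with h1 | h1
  · exact le_of_lt h1
  · exact le_of_eq h1.1

def edge (i : Fin m) (j : Fin n) : Prop :=
  a i ≤ x j ∧ x j ≤ b i ∧ s j ≤ y i ∧ y i ≤ e j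

noncomputable def NJ (j : Fin n) : Finset (Fin m) :=
  univ.filter fun i => edge a b y x s e i j

noncomputable def alive (X : ℝ) : Finset (Fin m) :=
  univ.filter fun h => a h ≤ X ∧ X ≤ b h

noncomputable def bel (y a b : Fin m → ℝ) (i : Fin m) (X : ℝ) : Finset (Fin m) :=
  (alive a b X).filter fun h => kappa y h < kappa y i

/-- the window: top `2t-1` elements of the alive-below set. -/
noncomputable def Wnd (i : Fin m) (X : ℝ) : Finset (Fin m) :=
  topw (kappa y) (2*t-1) (bel y a b i X)

noncomputable def Nbel (i : Fin m) (j : Fin n) : Finset (Fin m) :=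
  (NJ a b y x s e j).filter fun h => kappa y h < kappa y i

def Middle (i : Fin m) (j : Fin n) : Prop :=
  edge a b y x s e i j ∧ 2*t-1 ≤ (Nbel a b y x s e i j).card

/-- count of relevant birth events in `(X, X']`. -/
noncomputable def RELb (i : Fin m) (X X' : ℝ) : ℕ :=
  (univ.filter fun h => kappa y h < kappa y i ∧ X < a h ∧ a h ≤ X' ∧
    rk (kappa y) (bel y a b i (a h)) h < 2*t-1).card

/-- count of relevant death events in `[X, X')`. -/
noncomputable def RELd (i : Fin m) (X X' : ℝ) : ℕ :=
  (univ.filter fun h => kappa y h < kappa y i ∧ X ≤ b h ∧ b h < X' ∧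
    rk (kappa y) (bel y a b i (b h)) h < 2*t-1).card

noncomputable def REL (i : Fin m) (X X' : ℝ) : ℕ :=
  RELb t a b y i X X' + RELd t a b y i X X'

lemma NJ_subset_alive (j : Fin n) : NJ a b y x s e j ⊆ alive a b (x j) := by
  intro i hi
  rw [NJ, Finset.mem_filter] at hi
  simp only [alive, Finset.mem_filter]
  exact ⟨Finset.mem_univ _, hi.2.1, hi.2.2.1⟩

lemma consec {n0 i g : Fin m} {j : Fin n} (h0 : edge a b y x s e n0 j)
    (hi : edge a b y x s e i j) (hlo : kappa y n0 ≤ kappa y g)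
    (hhi : kappa y g ≤ kappa y i) (hal : g ∈ alive a b (x j)) :
    edge a b y x s e g j := by
  simp only [alive, Finset.mem_filter] at hal
  exact ⟨hal.2.1, hal.2.2, le_trans h0.2.2.1 (kappa_le_imp y hlo),
    le_trans (kappa_le_imp y hhi) hi.2.2.2⟩

lemma Nbel_subset_bel (i : Fin m) (j : Fin n) :
    Nbel a b y x s e i j ⊆ bel y a b i (x j) := by
  intro h hh
  simp only [Nbel, Finset.mem_filter] at hh
  simp only [bel, Finset.mem_filter]
  exact ⟨NJ_subset_alive a b y x s e j hh.1, hh.2⟩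

lemma bel_card_ge {i : Fin m} {j : Fin n} (hmid : Middle t a b y x s e i j) :
    2*t-1 ≤ (bel y a b i (x j)).card :=
  le_trans hmid.2 (Finset.card_le_card (Nbel_subset_bel a b y x s e i j))

lemma Wnd_card {i : Fin m} {j : Fin n} (hmid : Middle t a b y x s e i j) :
    (Wnd t a b y i (x j)).card = 2*t-1 := by
  rw [Wnd, card_topw _ (kappa_inj y)]
  exact min_eq_left (bel_card_ge t a b y x s e hmid)

lemma Wnd_subset_NJ (ht : 1 ≤ t) {i : Fin m} {j : Fin n}
    (hmid : Middle t a b y x s e i j) :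
    Wnd t a b y i (x j) ⊆ NJ a b y x s e j := by
  have hwpos : 0 < 2*t-1 := by omega
  have hne : (topw (kappa y) (2*t-1) (Nbel a b y x s e i j)).Nonempty := by
    rw [← Finset.card_pos, card_topw _ (kappa_inj y)]
    have h2 := hmid.2
    omega
  obtain ⟨n0, hn0top, hn0min⟩ := Finset.exists_min_image _ (kappa y) hne
  have hn0 : n0 ∈ Nbel a b y x s e i j := topw_subset _ _ _ hn0top
  have hn0e : edge a b y x s e n0 j := by
    have := (Finset.mem_filter.1 hn0).1
    exact (Finset.mem_filter.1 this).2
  intro g hg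
  have hgbel : g ∈ bel y a b i (x j) := topw_subset _ _ _ hg
  have hgrk : rk (kappa y) (bel y a b i (x j)) g < 2*t-1 := (Finset.mem_filter.1 hg).2
  have hgal : g ∈ alive a b (x j) := (Finset.mem_filter.1 hgbel).1
  have hgbelow : kappa y g < kappa y i := (Finset.mem_filter.1 hgbel).2
  have hkey : kappa y n0 ≤ kappa y g := by
    by_contra hlt
    push_neg at hlt
    have hsub : topw (kappa y) (2*t-1) (Nbel a b y x s e i j) ⊆
        (bel y a b i (x j)).filter (fun z => kappa y g < kappa y z) := by
      intro z hz
      refine Finset.mem_filter.2 ⟨Nbel_subset_bel a b y x s e i j (topw_subset _ _ _ hz), ?_⟩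
      exact lt_of_lt_of_le hlt (hn0min z hz)
    have hge : 2*t-1 ≤ rk (kappa y) (bel y a b i (x j)) g := by
      rw [rk]
      calc 2*t-1 = (topw (kappa y) (2*t-1) (Nbel a b y x s e i j)).card := by
            rw [card_topw _ (kappa_inj y)]
            exact (min_eq_left hmid.2).symm
        _ ≤ _ := Finset.card_le_card hsub
    omega
  simp only [NJ, Finset.mem_filter]
  exact ⟨Finset.mem_univ _, consec a b y x s e hn0e hmid.1 hkey (le_of_lt hgbelow) hgal⟩

lemma RELb_add (i : Fin m) {u v z : ℝ} (huv : u ≤ v) (hvz : v ≤ z) :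
    RELb t a b y i u v + RELb t a b y i v z = RELb t a b y i u z := by
  unfold RELb
  rw [← Finset.card_union_of_disjoint]
  · congr 1
    ext h
    simp only [Finset.mem_union, Finset.mem_filter, Finset.mem_univ, true_and]
    constructor
    · rintro (⟨h1, h2, h3, h4⟩ | ⟨h1, h2, h3, h4⟩)
      · exact ⟨h1, h2, le_trans h3 hvz, h4⟩
      · exact ⟨h1, lt_of_le_of_lt huv h2, h3, h4⟩
    · rintro ⟨h1, h2, h3, h4⟩
      rcases le_or_gt (a h) v with hc | hc
      · exact Or.inl ⟨h1, h2, hc, h4⟩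
      · exact Or.inr ⟨h1, hc, h3, h4⟩
  · rw [Finset.disjoint_left]
    intro h h1 h2
    simp only [Finset.mem_filter] at h1 h2
    exact absurd h2.2.2.1 (not_lt.2 h1.2.2.2.1)

lemma RELd_add (i : Fin m) {u v z : ℝ} (huv : u ≤ v) (hvz : v ≤ z) :
    RELd t a b y i u v + RELd t a b y i v z = RELd t a b y i u z := by
  unfold RELd
  rw [← Finset.card_union_of_disjoint]
  · congr 1
    ext h
    simp only [Finset.mem_union, Finset.mem_filter, Finset.mem_univ, true_and]
    constructor
    · rintro (⟨h1, h2, h3, h4⟩ | ⟨h1, h2, h3, h4⟩)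
      · exact ⟨h1, h2, lt_of_lt_of_le h3 hvz, h4⟩
      · exact ⟨h1, le_trans huv h2, h3, h4⟩
    · rintro ⟨h1, h2, h3, h4⟩
      rcases lt_or_ge (b h) v with hc | hc
      · exact Or.inl ⟨h1, h2, hc, h4⟩
      · exact Or.inr ⟨h1, hc, h3, h4⟩
  · rw [Finset.disjoint_left]
    intro h h1 h2
    simp only [Finset.mem_filter] at h1 h2
    exact absurd h2.2.2.1 (not_le.2 h1.2.2.2.1)

lemma REL_add (i : Fin m) {u v z : ℝ} (huv : u ≤ v) (hvz : v ≤ z) :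
    REL t a b y i u v + REL t a b y i v z = REL t a b y i u z := by
  unfold REL
  rw [← RELb_add t a b y i huv hvz, ← RELd_add t a b y i huv hvz]
  ring

lemma REL_mono (i : Fin m) {u v u' v' : ℝ} (hu : u' ≤ u) (hv : v ≤ v') :
    REL t a b y i u v ≤ REL t a b y i u' v' := by
  unfold REL RELb RELd
  apply Nat.add_le_add <;> apply Finset.card_le_card <;> intro h hh <;>
    simp only [Finset.mem_filter, Finset.mem_univ, true_and] at hh ⊢
  · exact ⟨hh.1, lt_of_le_of_lt hu hh.2.1, le_trans hh.2.2.1 hv, hh.2.2.2⟩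
  · exact ⟨hh.1, le_trans hu hh.2.1, lt_of_lt_of_le hh.2.2.1 hv, hh.2.2.2⟩

lemma RELb_self (i : Fin m) (X : ℝ) : RELb t a b y i X X = 0 := by
  unfold RELb
  rw [Finset.card_eq_zero, Finset.filter_eq_empty_iff]
  rintro h - ⟨-, h2, h3, -⟩
  exact absurd h2 (not_lt.2 h3)

lemma RELd_self (i : Fin m) (X : ℝ) : RELd t a b y i X X = 0 := by
  unfold RELd
  rw [Finset.card_eq_zero, Finset.filter_eq_empty_iff]
  rintro h - ⟨-, h2, h3, -⟩
  exact absurd h3 (not_lt.2 h2)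
lemma REL_self (i : Fin m) (X : ℝ) : REL t a b y i X X = 0 := by
  unfold REL
  rw [RELb_self, RELd_self]

/-- THE CHAIN LEMMA -/
lemma chain (i : Fin m) :
    ∀ (k : ℕ) (X X' : ℝ), X ≤ X' →
      ((univ.filter fun h : Fin m => X < a h ∧ a h < X').card
        + (univ.filter fun h : Fin m => X < b h ∧ b h < X').card) ≤ k →
      (Wnd t a b y i X \ Wnd t a b y i X').card ≤ REL t a b y i X X' := by
  intro k
  induction k using Nat.strong_induction_on with
  | _ k ih =>
  intro X X' hXX hmu
  by_cases hex : ∃ h0 : Fin m, (X < a h0 ∧ a h0 < X') ∨ (X < b h0 ∧ b h0 < X')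
  · obtain ⟨h0, hc⟩ := hex
    set c0 : ℝ := if X < a h0 ∧ a h0 < X' then a h0 else b h0 with hc0
    have hc0in : X < c0 ∧ c0 < X' := by
      by_cases hca : X < a h0 ∧ a h0 < X'
      · rw [hc0, if_pos hca]; exact hca
      · rw [hc0, if_neg hca]; exact hc.resolve_left hca
    have hsubaL : (univ.filter fun h : Fin m => X < a h ∧ a h < c0) ⊆
        (univ.filter fun h : Fin m => X < a h ∧ a h < X') := by
      intro z hz
      simp only [Finset.mem_filter, Finset.mem_univ, true_and] at hz ⊢
      exact ⟨hz.1, lt_trans hz.2 hc0in.2⟩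
    have hsubbL : (univ.filter fun h : Fin m => X < b h ∧ b h < c0) ⊆
        (univ.filter fun h : Fin m => X < b h ∧ b h < X') := by
      intro z hz
      simp only [Finset.mem_filter, Finset.mem_univ, true_and] at hz ⊢
      exact ⟨hz.1, lt_trans hz.2 hc0in.2⟩
    have hsubaR : (univ.filter fun h : Fin m => c0 < a h ∧ a h < X') ⊆
        (univ.filter fun h : Fin m => X < a h ∧ a h < X') := by
      intro z hz
      simp only [Finset.mem_filter, Finset.mem_univ, true_and] at hz ⊢
      exact ⟨lt_trans hc0in.1 hz.1, hz.2⟩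
    have hsubbR : (univ.filter fun h : Fin m => c0 < b h ∧ b h < X') ⊆
        (univ.filter fun h : Fin m => X < b h ∧ b h < X') := by
      intro z hz
      simp only [Finset.mem_filter, Finset.mem_univ, true_and] at hz ⊢
      exact ⟨lt_trans hc0in.1 hz.1, hz.2⟩
    have hdropL : (univ.filter fun h : Fin m => X < a h ∧ a h < c0).card
        + (univ.filter fun h : Fin m => X < b h ∧ b h < c0).card < k := by
      have hb2 := Finset.card_le_card hsubbL
      have ha2 := Finset.card_le_card hsubaL
      by_cases hca : X < a h0 ∧ a h0 < X'
      · have hc0a : c0 = a h0 := by rw [hc0, if_pos hca]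
        have h1 : (univ.filter fun h : Fin m => X < a h ∧ a h < c0).card
            < (univ.filter fun h : Fin m => X < a h ∧ a h < X').card := by
          apply Finset.card_lt_card
          rw [Finset.ssubset_iff_of_subset hsubaL]
          refine ⟨h0, by simp only [Finset.mem_filter, Finset.mem_univ, true_and]; exact hca, ?_⟩
          simp only [Finset.mem_filter, Finset.mem_univ, true_and, hc0a]
          rintro ⟨-, hlt⟩
          exact lt_irrefl _ hlt
        omega
      · have hcb : X < b h0 ∧ b h0 < X' := hc.resolve_left hca
        have hc0b : c0 = b h0 := by rw [hc0, if_neg hca]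
        have h1 : (univ.filter fun h : Fin m => X < b h ∧ b h < c0).card
            < (univ.filter fun h : Fin m => X < b h ∧ b h < X').card := by
          apply Finset.card_lt_card
          rw [Finset.ssubset_iff_of_subset hsubbL]
          refine ⟨h0, by simp only [Finset.mem_filter, Finset.mem_univ, true_and]; exact hcb, ?_⟩
          simp only [Finset.mem_filter, Finset.mem_univ, true_and, hc0b]
          rintro ⟨-, hlt⟩
          exact lt_irrefl _ hlt
        omega
    have hdropR : (univ.filter fun h : Fin m => c0 < a h ∧ a h < X').card
        + (univ.filter fun h : Fin m => c0 < b h ∧ b h < X').card < k := by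
      have hb2 := Finset.card_le_card hsubbR
      have ha2 := Finset.card_le_card hsubaR
      by_cases hca : X < a h0 ∧ a h0 < X'
      · have hc0a : c0 = a h0 := by rw [hc0, if_pos hca]
        have h1 : (univ.filter fun h : Fin m => c0 < a h ∧ a h < X').card
            < (univ.filter fun h : Fin m => X < a h ∧ a h < X').card := by
          apply Finset.card_lt_card
          rw [Finset.ssubset_iff_of_subset hsubaR]
          refine ⟨h0, by simp only [Finset.mem_filter, Finset.mem_univ, true_and]; exact hca, ?_⟩
          simp only [Finset.mem_filter, Finset.mem_univ, true_and, hc0a]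
          rintro ⟨hlt, -⟩
          exact lt_irrefl _ hlt
        omega
      · have hcb : X < b h0 ∧ b h0 < X' := hc.resolve_left hca
        have hc0b : c0 = b h0 := by rw [hc0, if_neg hca]
        have h1 : (univ.filter fun h : Fin m => c0 < b h ∧ b h < X').card
            < (univ.filter fun h : Fin m => X < b h ∧ b h < X').card := by
          apply Finset.card_lt_card
          rw [Finset.ssubset_iff_of_subset hsubbR]
          refine ⟨h0, by simp only [Finset.mem_filter, Finset.mem_univ, true_and]; exact hcb, ?_⟩
          simp only [Finset.mem_filter, Finset.mem_univ, true_and, hc0b]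
          rintro ⟨hlt, -⟩
          exact lt_irrefl _ hlt
        omega
    have htri : (Wnd t a b y i X \ Wnd t a b y i X').card ≤
        (Wnd t a b y i X \ Wnd t a b y i c0).card +
        (Wnd t a b y i c0 \ Wnd t a b y i X').card := by
      calc _ ≤ ((Wnd t a b y i X \ Wnd t a b y i c0) ∪
            (Wnd t a b y i c0 \ Wnd t a b y i X')).card := by
            apply Finset.card_le_card
            intro z hz
            rw [Finset.mem_sdiff] at hz
            by_cases hzc : z ∈ Wnd t a b y i c0
            · exact Finset.mem_union.2 (Or.inr (Finset.mem_sdiff.2 ⟨hzc, hz.2⟩))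
            · exact Finset.mem_union.2 (Or.inl (Finset.mem_sdiff.2 ⟨hz.1, hzc⟩))
        _ ≤ _ := Finset.card_union_le _ _
    calc (Wnd t a b y i X \ Wnd t a b y i X').card ≤ _ := htri
      _ ≤ REL t a b y i X c0 + REL t a b y i c0 X' :=
          Nat.add_le_add (ih _ hdropL X c0 (le_of_lt hc0in.1) (le_refl _))
            (ih _ hdropR c0 X' (le_of_lt hc0in.2) (le_refl _))
      _ = REL t a b y i X X' := REL_add t a b y i (le_of_lt hc0in.1) (le_of_lt hc0in.2)
  · have hex1 : ∀ z : Fin m, ¬ (X < a z ∧ a z < X') := fun z hh => hex ⟨z, Or.inl hh⟩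
    have hex2 : ∀ z : Fin m, ¬ (X < b z ∧ b z < X') := fun z hh => hex ⟨z, Or.inr hh⟩
    have hstep := step (kappa y) (kappa_inj y) (2*t-1) (bel y a b i X) (bel y a b i X')
    have hterm1 : ((bel y a b i X \ bel y a b i X').filter
        fun h => rk (kappa y) (bel y a b i X) h < 2*t-1).card ≤ RELd t a b y i X X' := by
      apply Finset.card_le_card
      intro z hz
      rw [Finset.mem_filter, Finset.mem_sdiff] at hz
      obtain ⟨⟨hzS, hznot⟩, hrkz⟩ := hz
      have hzal : z ∈ alive a b X := (Finset.mem_filter.1 hzS).1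
      have hzk : kappa y z < kappa y i := (Finset.mem_filter.1 hzS).2
      have haz : a z ≤ X := ((Finset.mem_filter.1 hzal).2).1
      have hbz : X ≤ b z := ((Finset.mem_filter.1 hzal).2).2
      have hbz' : b z < X' := by
        by_contra hge
        push_neg at hge
        apply hznot
        rw [bel, Finset.mem_filter]
        refine ⟨?_, hzk⟩
        rw [alive, Finset.mem_filter]
        exact ⟨Finset.mem_univ _, le_trans haz hXX, hge⟩
      have hbzX : b z = X := by
        have : ¬ X < b z := fun hlt => hex2 z ⟨hlt, hbz'⟩
        exact le_antisymm (not_lt.1 this) hbz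
      refine Finset.mem_filter.2 ⟨Finset.mem_univ _, hzk, le_of_eq hbzX.symm, hbz', ?_⟩
      rw [hbzX]
      exact hrkz
    have hterm2 : ((bel y a b i X' \ bel y a b i X).filter
        fun h => rk (kappa y) (bel y a b i X') h < 2*t-1).card ≤ RELb t a b y i X X' := by
      apply Finset.card_le_card
      intro z hz
      rw [Finset.mem_filter, Finset.mem_sdiff] at hz
      obtain ⟨⟨hzS, hznot⟩, hrkz⟩ := hz
      have hzal : z ∈ alive a b X' := (Finset.mem_filter.1 hzS).1
      have hzk : kappa y z < kappa y i := (Finset.mem_filter.1 hzS).2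
      have haz : a z ≤ X' := ((Finset.mem_filter.1 hzal).2).1
      have hbz : X' ≤ b z := ((Finset.mem_filter.1 hzal).2).2
      have haz' : X < a z := by
        by_contra hge
        push_neg at hge
        apply hznot
        rw [bel, Finset.mem_filter]
        refine ⟨?_, hzk⟩
        rw [alive, Finset.mem_filter]
        exact ⟨Finset.mem_univ _, hge, le_trans hXX hbz⟩
      have hazX : a z = X' := by
        have : ¬ a z < X' := fun hlt => hex1 z ⟨haz', hlt⟩
        exact le_antisymm haz (not_lt.1 this)
      refine Finset.mem_filter.2 ⟨Finset.mem_univ _, hzk, haz', haz, ?_⟩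
      rw [hazX]
      exact hrkz
    calc (Wnd t a b y i X \ Wnd t a b y i X').card
        ≤ _ := hstep
      _ ≤ RELd t a b y i X X' + RELb t a b y i X X' := Nat.add_le_add hterm1 hterm2
      _ = REL t a b y i X X' := by unfold REL; ring

lemma teleREL (i : Fin m) (c : ℕ → ℝ) :
    ∀ r : ℕ, (∀ l, l < r → c l ≤ c (l+1)) →
      c 0 ≤ c r ∧ (∑ l ∈ Finset.range r, REL t a b y i (c l) (c (l+1)))
        = REL t a b y i (c 0) (c r) := by
  intro r
  induction r with
  | zero => intro _; exact ⟨le_refl _, by rw [Finset.sum_range_zero, REL_self]⟩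
  | succ r ihr =>
    intro hmono
    obtain ⟨h0r, hsum⟩ := ihr (fun l hl => hmono l (by omega))
    have hrr1 : c r ≤ c (r+1) := hmono r (by omega)
    refine ⟨le_trans h0r hrr1, ?_⟩
    rw [Finset.sum_range_succ, hsum]
    exact REL_add t a b y i h0r hrr1

lemma spanREL (ht : 2 ≤ t)
    (hfree : ¬ ∃ (S : Finset (Fin m)) (T : Finset (Fin n)), S.card = t ∧ T.card = t ∧
        ∀ i ∈ S, ∀ j ∈ T, edge a b y x s e i j)
    (i : Fin m) (g : ℕ → Fin n)
    (hginj : ∀ k, k < t → ∀ l, l < t → g k = g l → k = l)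
    (hmid : ∀ k, k < t → Middle t a b y x s e i (g k))
    (hmono : ∀ k l, k ≤ l → l < t → x (g k) ≤ x (g l)) :
    t + 1 ≤ REL t a b y i (x (g 0)) (x (g (t-1))) := by
  by_contra hcon
  push_neg at hcon
  have hREL : REL t a b y i (x (g 0)) (x (g (t-1))) ≤ t := by omega
  set Bad : Finset (Fin m) :=
    (Finset.range (t-1)).biUnion
      (fun l => Wnd t a b y i (x (g l)) \ Wnd t a b y i (x (g (l+1)))) with hBadDef
  have hBadCard : Bad.card ≤ t := by
    calc Bad.card ≤ ∑ l ∈ Finset.range (t-1),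
          (Wnd t a b y i (x (g l)) \ Wnd t a b y i (x (g (l+1)))).card :=
        Finset.card_biUnion_le
      _ ≤ ∑ l ∈ Finset.range (t-1), REL t a b y i (x (g l)) (x (g (l+1))) := by
        apply Finset.sum_le_sum
        intro l hl
        rw [Finset.mem_range] at hl
        exact chain t a b y i _ (x (g l)) (x (g (l+1)))
          (hmono l (l+1) (by omega) (by omega)) (le_refl _)
      _ = REL t a b y i (x (g 0)) (x (g (t-1))) := by
        have := teleREL t a b y i (fun l => x (g l)) (t-1)
          (fun l hl => hmono l (l+1) (by omega) (by omega))
        exact this.2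
      _ ≤ t := hREL
  have hW0card : (Wnd t a b y i (x (g 0))).card = 2*t-1 :=
    Wnd_card t a b y x s e (hmid 0 (by omega))
  set Sfin := Wnd t a b y i (x (g 0)) \ Bad with hSfinDef
  have hSfincard : t-1 ≤ Sfin.card := by
    have hsub : Wnd t a b y i (x (g 0)) ⊆ Sfin ∪ Bad := by
      intro z hz
      by_cases hzb : z ∈ Bad
      · exact Finset.mem_union.2 (Or.inr hzb)
      · exact Finset.mem_union.2 (Or.inl (Finset.mem_sdiff.2 ⟨hz, hzb⟩))
    have h1 := Finset.card_le_card hsub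
    have h2 := Finset.card_union_le Sfin Bad
    omega
  have hSfinW : ∀ k, k < t → Sfin ⊆ Wnd t a b y i (x (g k)) := by
    intro k
    induction k with
    | zero => intro _ z hz; exact (Finset.mem_sdiff.1 hz).1
    | succ k ihk =>
      intro hk z hz
      have hzk := ihk (by omega) hz
      by_contra hzn
      have hzbad : z ∈ Bad := by
        rw [hBadDef]
        apply Finset.mem_biUnion.2
        exact ⟨k, Finset.mem_range.2 (by omega), Finset.mem_sdiff.2 ⟨hzk, hzn⟩⟩
      exact (Finset.mem_sdiff.1 hz).2 hzbad
  have hSfinN : ∀ k, k < t → Sfin ⊆ NJ a b y x s e (g k) := by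
    intro k hk
    exact subset_trans (hSfinW k hk) (Wnd_subset_NJ t a b y x s e (by omega) (hmid k hk))
  obtain ⟨S0, hS0sub, hS0card⟩ := Finset.exists_subset_card_eq hSfincard
  have hinotS0 : i ∉ S0 := by
    intro hi
    have h1 : i ∈ bel y a b i (x (g 0)) :=
      topw_subset _ _ _ ((Finset.mem_sdiff.1 (hS0sub hi)).1)
    exact lt_irrefl _ ((Finset.mem_filter.1 h1).2)
  apply hfree
  refine ⟨insert i S0, (Finset.range t).image g, ?_, ?_, ?_⟩
  · rw [Finset.card_insert_of_notMem hinotS0, hS0card]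
    omega
  · rw [Finset.card_image_of_injOn, Finset.card_range]
    intro k hk l hl hkl
    rw [Finset.mem_coe, Finset.mem_range] at hk hl
    exact hginj k hk l hl hkl
  · intro i' hi' j hj
    rw [Finset.mem_image] at hj
    obtain ⟨k, hk, rfl⟩ := hj
    rw [Finset.mem_range] at hk
    rcases Finset.mem_insert.1 hi' with rfl | hi'
    · exact (hmid k hk).1
    · have hN := hSfinN k hk (hS0sub hi')
      exact (Finset.mem_filter.1 hN).2

lemma grouping (ht : 2 ≤ t)
    (hfree : ¬ ∃ (S : Finset (Fin m)) (T : Finset (Fin n)), S.card = t ∧ T.card = t ∧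
        ∀ i ∈ S, ∀ j ∈ T, edge a b y x s e i j)
    (i : Fin m) :
    (univ.filter fun j => Middle t a b y x s e i j).card ≤
      (t-1) * (REL t a b y i (a i) (b i) / (t+1) + 1) := by
  set Ri := REL t a b y i (a i) (b i) with hRi
  set K := Ri / (t+1) with hK
  by_contra hcon
  push_neg at hcon
  set MJ := univ.filter fun j => Middle t a b y x s e i j with hMJ
  set r : Fin n → Fin n → Prop := fun j j' => toLex (x j, (j:ℕ)) ≤ toLex (x j', (j':ℕ)) with hr
  haveI : IsTrans (Fin n) r := ⟨fun _ _ _ h1 h2 => le_trans h1 h2⟩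
  haveI : IsAntisymm (Fin n) r := ⟨fun j j' h1 h2 => by
    have h3 := le_antisymm h1 h2
    have h4 := congrArg (fun p => (ofLex p).2) h3
    exact Fin.val_injective h4⟩
  haveI : IsTotal (Fin n) r := ⟨fun j j' => le_total _ _⟩
  set L := MJ.sort r with hL
  have hlen : L.length = MJ.card := Finset.length_sort r
  have hnodup : L.Nodup := Finset.sort_nodup MJ r
  have hsorted : L.Pairwise r := Finset.pairwise_sort MJ r
  have hmemL : ∀ j ∈ L, Middle t a b y x s e i j := by
    intro j hj
    have h1 := (Finset.mem_sort r).1 hj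
    exact (Finset.mem_filter.1 h1).2
  have hbig : (t-1) * (K+1) < L.length := by rw [hlen]; exact hcon
  have hlenpos : 0 < L.length := lt_of_le_of_lt (Nat.zero_le _) hbig
  have hposlt : ∀ k, k ≤ K+1 → k*(t-1) < L.length := by
    intro k hk
    calc k*(t-1) ≤ (K+1)*(t-1) := Nat.mul_le_mul_right _ hk
      _ = (t-1)*(K+1) := Nat.mul_comm _ _
      _ < L.length := hbig
  set gg : ℕ → Fin n := fun p => L.getD p (L.get ⟨0, hlenpos⟩) with hgg
  have hggeq : ∀ p, (hp : p < L.length) → gg p = L.get ⟨p, hp⟩ := by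
    intro p hp
    rw [hgg]
    exact List.getD_eq_getElem (l := L) _ hp
  have hggmid : ∀ p, p < L.length → Middle t a b y x s e i (gg p) := by
    intro p hp
    rw [hggeq p hp]
    exact hmemL _ (List.get_mem L ⟨p, hp⟩)
  have hggmono : ∀ p q, p ≤ q → q < L.length → x (gg p) ≤ x (gg q) := by
    intro p q hpq hq
    have hp : p < L.length := lt_of_le_of_lt (by omega) hq
    rcases Nat.eq_or_lt_of_le hpq with rfl | hlt
    · exact le_refl _
    · have hrel : r (L.get ⟨p, hp⟩) (L.get ⟨q, hq⟩) :=
        hsorted.rel_get_of_lt (by exact hlt)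
      rw [hggeq p hp, hggeq q hq]
      rcases (Prod.Lex.le_iff).1 hrel with h1 | h1
      · exact le_of_lt h1
      · exact le_of_eq h1.1
  have hgginj : ∀ p q, p < L.length → q < L.length → gg p = gg q → p = q := by
    intro p q hp hq heq
    rw [hggeq p hp, hggeq q hq] at heq
    have h5 := (List.nodup_iff_injective_get.1 hnodup) heq
    exact Fin.mk.inj_iff.1 h5
  -- each consecutive block of t gives t+1 relevant events
  have hblock : ∀ k, k < K+1 →
      t + 1 ≤ REL t a b y i (x (gg (k*(t-1)))) (x (gg ((k+1)*(t-1)))) := by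
    intro k hk
    have hsm : (k+1)*(t-1) = k*(t-1) + (t-1) := Nat.succ_mul _ _
    have hlt1 := hposlt (k+1) (by omega)
    have hres := spanREL t a b y x s e ht hfree i (fun l => gg (k*(t-1) + l))
      ?_ ?_ ?_
    · have he0 : k*(t-1) + 0 = k*(t-1) := by omega
      have he1 : k*(t-1) + (t-1) = (k+1)*(t-1) := by omega
      simp only [he0, he1] at hres
      exact hres
    · intro k' hk' l hl heq
      have hp1 : k*(t-1) + k' < L.length := by omega
      have hp2 : k*(t-1) + l < L.length := by omega
      have h6 := hgginj _ _ hp1 hp2 heq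
      omega
    · intro k' hk'
      exact hggmid _ (by omega)
    · intro k' l hk'l hl
      exact hggmono _ _ (by omega) (by omega)
  -- telescope
  set c : ℕ → ℝ := fun k => x (gg (k*(t-1))) with hc
  have hcmono : ∀ l, l < K+1 → c l ≤ c (l+1) := by
    intro l hl
    apply hggmono _ _ (Nat.mul_le_mul_right _ (by omega))
    exact hposlt (l+1) (by omega)
  obtain ⟨hc0, hcsum⟩ := teleREL t a b y i c (K+1) hcmono
  have hsumge : (K+1) * (t+1) ≤ REL t a b y i (c 0) (c (K+1)) := by
    rw [← hcsum]
    calc (K+1) * (t+1) = ∑ _l ∈ Finset.range (K+1), (t+1) := by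
          rw [Finset.sum_const, Finset.card_range, smul_eq_mul]
      _ ≤ _ := Finset.sum_le_sum (fun l hl => hblock l (Finset.mem_range.1 hl))
  have hRile : REL t a b y i (c 0) (c (K+1)) ≤ Ri := by
    rw [hRi]
    apply REL_mono
    · have hm := hggmid 0 hlenpos
      have : gg (0*(t-1)) = gg 0 := by norm_num
      rw [hc]
      simp only [Nat.zero_mul]
      exact hm.1.1
    · have hm := hggmid ((K+1)*(t-1)) (hposlt (K+1) (le_refl _))
      exact hm.1.2.1
  have hfin : (K+1)*(t+1) ≤ Ri := le_trans hsumge hRile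
  have : K+1 ≤ K := by
    rw [hK]
    exact (Nat.le_div_iff_mul_le (by omega)).2 hfin
  omega

lemma injOn_of_kappa_mono {S : Finset (Fin m)} {phi : Fin m → ℕ}
    (hmono : ∀ i ∈ S, ∀ i' ∈ S, kappa y i < kappa y i' → phi i < phi i') :
    Set.InjOn phi ↑S := by
  intro i hi i' hi' heq
  rw [Finset.mem_coe] at hi hi'
  by_contra hne
  rcases lt_trichotomy (kappa y i) (kappa y i') with h1|h1|h1
  · exact absurd heq (Nat.ne_of_lt (hmono i hi i' hi' h1))
  · exact hne (kappa_inj y h1)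
  · exact absurd heq.symm (Nat.ne_of_lt (hmono i' hi' i hi h1))

lemma rk_bel_lt {h i i' : Fin m} {X : ℝ}
    (hii' : kappa y i < kappa y i')
    (hiX : i ∈ alive a b X) (hhi : kappa y h < kappa y i) :
    rk (kappa y) (bel y a b i X) h < rk (kappa y) (bel y a b i' X) h := by
  apply Finset.card_lt_card
  have hsub : (bel y a b i X).filter (fun g => kappa y h < kappa y g) ⊆
      (bel y a b i' X).filter (fun g => kappa y h < kappa y g) := by
    intro z hz
    rw [Finset.mem_filter] at hz ⊢
    exact ⟨Finset.mem_filter.2 ⟨(Finset.mem_filter.1 hz.1).1, lt_trans (Finset.mem_filter.1 hz.1).2 hii'⟩, hz.2⟩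
  rw [Finset.ssubset_iff_of_subset hsub]
  refine ⟨i, ?_, ?_⟩
  · exact Finset.mem_filter.2 ⟨Finset.mem_filter.2 ⟨hiX, hii'⟩, hhi⟩
  · intro hmem
    exact lt_irrefl _ ((Finset.mem_filter.1 (Finset.mem_filter.1 hmem).1).2)

lemma RELb_glob : ∑ i : Fin m, RELb t a b y i (a i) (b i) ≤ m * (2*t-1) := by
  have hswap : ∑ i : Fin m, RELb t a b y i (a i) (b i)
      = ∑ h : Fin m, (univ.filter fun i : Fin m => kappa y h < kappa y i ∧ a i < a h ∧
          a h ≤ b i ∧ rk (kappa y) (bel y a b i (a h)) h < 2*t-1).card := by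
    unfold RELb
    simp only [Finset.card_filter]
    rw [Finset.sum_comm]
  rw [hswap]
  have hinner : ∀ h : Fin m, (univ.filter fun i : Fin m => kappa y h < kappa y i ∧ a i < a h ∧
      a h ≤ b i ∧ rk (kappa y) (bel y a b i (a h)) h < 2*t-1).card ≤ 2*t-1 := by
    intro h
    have hle := Finset.card_le_card_of_injOn
      (s := univ.filter fun i : Fin m => kappa y h < kappa y i ∧ a i < a h ∧
          a h ≤ b i ∧ rk (kappa y) (bel y a b i (a h)) h < 2*t-1)
      (f := fun i => rk (kappa y) (bel y a b i (a h)) h)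
      (t := Finset.range (2*t-1)) ?_ ?_
    · simpa using hle
    · intro i hi
      rw [Finset.mem_coe, Finset.mem_filter] at hi
      exact Finset.mem_range.2 hi.2.2.2.2
    · apply injOn_of_kappa_mono
      intro i hi i' hi' hlt
      rw [Finset.mem_filter] at hi hi'
      apply rk_bel_lt a b y hlt ?_ hi.2.1
      rw [alive, Finset.mem_filter]
      exact ⟨Finset.mem_univ _, le_of_lt hi.2.2.1, hi.2.2.2.1⟩
  calc ∑ h : Fin m, _ ≤ ∑ _h : Fin m, (2*t-1) := Finset.sum_le_sum (fun h _ => hinner h)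
    _ = m * (2*t-1) := by rw [Finset.sum_const, Finset.card_univ, Fintype.card_fin, smul_eq_mul]

lemma RELd_glob : ∑ i : Fin m, RELd t a b y i (a i) (b i) ≤ m * (2*t-1) := by
  have hswap : ∑ i : Fin m, RELd t a b y i (a i) (b i)
      = ∑ h : Fin m, (univ.filter fun i : Fin m => kappa y h < kappa y i ∧ a i ≤ b h ∧
          b h < b i ∧ rk (kappa y) (bel y a b i (b h)) h < 2*t-1).card := by
    unfold RELd
    simp only [Finset.card_filter]
    rw [Finset.sum_comm]
  rw [hswap]
  have hinner : ∀ h : Fin m, (univ.filter fun i : Fin m => kappa y h < kappa y i ∧ a i ≤ b h ∧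
      b h < b i ∧ rk (kappa y) (bel y a b i (b h)) h < 2*t-1).card ≤ 2*t-1 := by
    intro h
    have hle := Finset.card_le_card_of_injOn
      (s := univ.filter fun i : Fin m => kappa y h < kappa y i ∧ a i ≤ b h ∧
          b h < b i ∧ rk (kappa y) (bel y a b i (b h)) h < 2*t-1)
      (f := fun i => rk (kappa y) (bel y a b i (b h)) h)
      (t := Finset.range (2*t-1)) ?_ ?_
    · simpa using hle
    · intro i hi
      rw [Finset.mem_coe, Finset.mem_filter] at hi
      exact Finset.mem_range.2 hi.2.2.2.2
    · apply injOn_of_kappa_mono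
      intro i hi i' hi' hlt
      rw [Finset.mem_filter] at hi hi'
      apply rk_bel_lt a b y hlt ?_ hi.2.1
      rw [alive, Finset.mem_filter]
      exact ⟨Finset.mem_univ _, hi.2.2.1, le_of_lt hi.2.2.2.1⟩
  calc ∑ h : Fin m, _ ≤ ∑ _h : Fin m, (2*t-1) := Finset.sum_le_sum (fun h _ => hinner h)
    _ = m * (2*t-1) := by rw [Finset.sum_const, Finset.card_univ, Fintype.card_fin, smul_eq_mul]

lemma Nbel_card_lt {i i' : Fin m} {j : Fin n} (hii' : kappa y i < kappa y i')
    (hiN : i ∈ NJ a b y x s e j) :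
    (Nbel a b y x s e i j).card < (Nbel a b y x s e i' j).card := by
  apply Finset.card_lt_card
  have hsub : Nbel a b y x s e i j ⊆ Nbel a b y x s e i' j := by
    intro z hz
    exact Finset.mem_filter.2 ⟨(Finset.mem_filter.1 hz).1, lt_trans (Finset.mem_filter.1 hz).2 hii'⟩
  rw [Finset.ssubset_iff_of_subset hsub]
  exact ⟨i, Finset.mem_filter.2 ⟨hiN, hii'⟩, fun hmem => lt_irrefl _ (Finset.mem_filter.1 hmem).2⟩

lemma NM_bound (j : Fin n) :
    ((NJ a b y x s e j).filter
      fun i => ¬ (2*t-1 ≤ (Nbel a b y x s e i j).card)).card ≤ 2*t-1 := by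
  have hle := Finset.card_le_card_of_injOn
    (s := (NJ a b y x s e j).filter fun i => ¬ (2*t-1 ≤ (Nbel a b y x s e i j).card))
    (f := fun i => (Nbel a b y x s e i j).card) (t := Finset.range (2*t-1)) ?_ ?_
  · simpa using hle
  · intro i hi
    rw [Finset.mem_coe, Finset.mem_filter] at hi
    show (Nbel a b y x s e i j).card ∈ Finset.range (2*t-1)
    exact Finset.mem_range.2 (by omega)
  · apply injOn_of_kappa_mono
    intro i hi i' hi' hlt
    rw [Finset.mem_filter] at hi hi'
    exact Nbel_card_lt a b y x s e hlt hi.1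

lemma master (ht : 2 ≤ t)
    (hfree : ¬ ∃ (S : Finset (Fin m)) (T : Finset (Fin n)), S.card = t ∧ T.card = t ∧
        ∀ i ∈ S, ∀ j ∈ T, edge a b y x s e i j) :
    (univ.filter fun p : Fin m × Fin n => edge a b y x s e p.1 p.2).card ≤ 27*t*(m+n) := by
  have hsum : (univ.filter fun p : Fin m × Fin n => edge a b y x s e p.1 p.2).card
      = ∑ j : Fin n, (NJ a b y x s e j).card := by
    rw [Finset.card_filter, ← Finset.univ_product_univ, Finset.sum_product_right]
    refine Finset.sum_congr rfl (fun j _ => ?_)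
    rw [NJ, Finset.card_filter]
  have hNJb : ∀ j : Fin n, (NJ a b y x s e j).card ≤
      (2*t-1) + (univ.filter fun i => Middle t a b y x s e i j).card := by
    intro j
    have hsplit := Finset.card_filter_add_card_filter_not
      (s := NJ a b y x s e j) (p := fun i => 2*t-1 ≤ (Nbel a b y x s e i j).card)
    have h1 : ((NJ a b y x s e j).filter
        fun i => 2*t-1 ≤ (Nbel a b y x s e i j).card).card ≤
        (univ.filter fun i => Middle t a b y x s e i j).card := by
      apply Finset.card_le_card
      intro i hi
      rw [Finset.mem_filter] at hi
      exact Finset.mem_filter.2 ⟨Finset.mem_univ _, (Finset.mem_filter.1 hi.1).2, hi.2⟩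
    have h2 := NM_bound t a b y x s e j
    omega
  have hswapM : ∑ j : Fin n, (univ.filter fun i => Middle t a b y x s e i j).card
      = ∑ i : Fin m, (univ.filter fun j => Middle t a b y x s e i j).card := by
    simp only [Finset.card_filter]
    rw [Finset.sum_comm]
  have hMi : ∀ i : Fin m, (univ.filter fun j => Middle t a b y x s e i j).card ≤
      (t-1) + REL t a b y i (a i) (b i) := by
    intro i
    have h1 := grouping t a b y x s e ht hfree i
    set R := REL t a b y i (a i) (b i) with hR
    set K := R / (t+1) with hKdef
    have h2 : (t-1)*K ≤ R := by
      calc (t-1)*K ≤ (t+1)*K := Nat.mul_le_mul_right _ (by omega)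
        _ = K*(t+1) := Nat.mul_comm _ _
        _ ≤ R := Nat.div_mul_le_self R (t+1)
    have h3 : (t-1)*(K+1) = (t-1)*K + (t-1) := Nat.mul_succ _ _
    omega
  have hRtot : ∑ i : Fin m, REL t a b y i (a i) (b i) ≤ 2*(m*(2*t-1)) := by
    unfold REL
    rw [Finset.sum_add_distrib]
    have := RELb_glob t a b y
    have := RELd_glob t a b y
    omega
  -- combine
  have hfinal : (univ.filter fun p : Fin m × Fin n => edge a b y x s e p.1 p.2).card ≤
      n*(2*t-1) + (m*(t-1) + 2*(m*(2*t-1))) := by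
    rw [hsum]
    calc ∑ j : Fin n, (NJ a b y x s e j).card
        ≤ ∑ j : Fin n, ((2*t-1) + (univ.filter fun i => Middle t a b y x s e i j).card) :=
          Finset.sum_le_sum (fun j _ => hNJb j)
      _ = n*(2*t-1) + ∑ j : Fin n, (univ.filter fun i => Middle t a b y x s e i j).card := by
          rw [Finset.sum_add_distrib, Finset.sum_const, Finset.card_univ, Fintype.card_fin,
            smul_eq_mul]
      _ = n*(2*t-1) + ∑ i : Fin m, (univ.filter fun j => Middle t a b y x s e i j).card := by
          rw [hswapM]
      _ ≤ n*(2*t-1) + ∑ i : Fin m, ((t-1) + REL t a b y i (a i) (b i)) := by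
          exact Nat.add_le_add_left (Finset.sum_le_sum (fun i _ => hMi i)) _
      _ = n*(2*t-1) + (m*(t-1) + ∑ i : Fin m, REL t a b y i (a i) (b i)) := by
          rw [Finset.sum_add_distrib, Finset.sum_const, Finset.card_univ, Fintype.card_fin,
            smul_eq_mul]
      _ ≤ _ := by
          have := hRtot
          omega
  have harith : n*(2*t-1) + (m*(t-1) + 2*(m*(2*t-1))) ≤ 27*t*(m+n) := by
    have e1 : n*(2*t-1) ≤ n*(27*t) := Nat.mul_le_mul_left _ (by omega)
    have e2 : m*(t-1) + 2*(m*(2*t-1)) = m*((t-1) + ((2*t-1) + (2*t-1))) := by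
      rw [Nat.mul_add, Nat.mul_add]
      ring
    have e3 : m*((t-1) + ((2*t-1) + (2*t-1))) ≤ m*(27*t) := Nat.mul_le_mul_left _ (by omega)
    have e4 : 27*t*(m+n) = m*(27*t) + n*(27*t) := by ring
    omega
  omega

end Geom


end Stmt6Aux

/-- `K_{t,t}`-free families of horizontal/vertical segments in the plane
have at most `27 t (m + n)` intersecting pairs. -/
theorem stmt6 (m n t : ℕ) (ht : 2 ≤ t)
    (A : Fin m → Set (Fin 2 → ℝ)) (B : Fin n → Set (Fin 2 → ℝ))
    (hA : ∀ i, IsHorizSeg (A i)) (hB : ∀ j, IsVertSeg (B j))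
    (hfree : ¬ ∃ (S : Finset (Fin m)) (T : Finset (Fin n)), S.card = t ∧ T.card = t ∧
        ∀ i ∈ S, ∀ j ∈ T, (A i ∩ B j).Nonempty) :
    Nat.card {p : Fin m × Fin n // (A p.1 ∩ B p.2).Nonempty} ≤ 27 * t * (m + n) := by
  classical
  choose a b yy hco using hA
  choose ss ee xx hco' using hB
  have hAeq : ∀ i, A i = {p : Fin 2 → ℝ | p 0 ∈ Set.Icc (a i) (b i) ∧ p 1 = yy i} :=
    fun i => (hco i).2
  have hBeq : ∀ j, B j = {p : Fin 2 → ℝ | p 0 = xx j ∧ p 1 ∈ Set.Icc (ss j) (ee j)} :=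
    fun j => (hco' j).2
  have hedge : ∀ i j, (A i ∩ B j).Nonempty ↔ Stmt6Aux.edge a b yy xx ss ee i j := by
    intro i j
    constructor
    · rintro ⟨p, hpA, hpB⟩
      rw [hAeq i] at hpA
      rw [hBeq j] at hpB
      simp only [Set.mem_setOf_eq, Set.mem_Icc] at hpA hpB
      obtain ⟨⟨h1, h2⟩, h3⟩ := hpA
      obtain ⟨h4, h5, h6⟩ := hpB
      refine ⟨?_, ?_, ?_, ?_⟩
      · rw [← h4]; exact h1
      · rw [← h4]; exact h2
      · rw [← h3]; exact h5
      · rw [← h3]; exact h6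
    · rintro ⟨h1, h2, h3, h4⟩
      refine ⟨![xx j, yy i], ?_, ?_⟩
      · rw [hAeq i]
        simp only [Set.mem_setOf_eq, Set.mem_Icc, Matrix.cons_val_zero, Matrix.cons_val_one,
          Matrix.head_cons]
        exact ⟨⟨h1, h2⟩, trivial⟩
      · rw [hBeq j]
        simp only [Set.mem_setOf_eq, Set.mem_Icc, Matrix.cons_val_zero, Matrix.cons_val_one,
          Matrix.head_cons]
        exact ⟨trivial, h3, h4⟩
  have hcard : Nat.card {p : Fin m × Fin n // (A p.1 ∩ B p.2).Nonempty}
      = (Finset.univ.filter fun p : Fin m × Fin n =>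
          Stmt6Aux.edge a b yy xx ss ee p.1 p.2).card := by
    rw [Nat.card_eq_fintype_card, Fintype.card_subtype]
    apply Finset.card_bij (fun p _ => p) ?_ ?_ ?_
    · intro p hp
      rw [Finset.mem_filter] at hp ⊢
      exact ⟨hp.1, (hedge p.1 p.2).1 hp.2⟩
    · intro p q _ _ h
      exact h
    · intro p hp
      rw [Finset.mem_filter] at hp
      exact ⟨p, Finset.mem_filter.2 ⟨hp.1, (hedge p.1 p.2).2 hp.2⟩, rfl⟩
  rw [hcard]
  have hfree' : ¬ ∃ (S : Finset (Fin m)) (T : Finset (Fin n)), S.card = t ∧ T.card = t ∧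
        ∀ i ∈ S, ∀ j ∈ T, Stmt6Aux.edge a b yy xx ss ee i j := by
    rintro ⟨S, T, h1, h2, h3⟩
    exact hfree ⟨S, T, h1, h2, fun i hi j hj => (hedge i j).2 (h3 i hi j hj)⟩
  exact Stmt6Aux.master t a b yy xx ss ee ht hfree'
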